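/- Let A ∈ ℝ^{n×n}, B ∈ ℝ^{n×p}, C ∈ ℝ^{m×n}, α ∈ (0,1), μ₁ > 0, P ∈ ℝ^{n×n} positive definite, and Y ∈ ℝ^{n×m}, and suppose the block matrix with rows [−P, *, *, *], [Aᵀ(P − CᵀYᵀ), (α−1)P, *, *], [BᵀP, 0, −αμ₁I, *], [Yᵀ, 0, 0, −αμ₁I] (filled symmetrically) is negative semidefinite. Set L = P^{−1}Y. Then for every e ∈ ℝ^{n}, w₁ ∈ ℝ^{p}, w₂ ∈ ℝ^{m}, the successor error e⁺ := (I − LC)A e − B w₁ − L w₂ satisfies e⁺ᵀ P e⁺ ≤ (1 − α) eᵀ P e + α μ₁ (w₁ᵀw₁ + w₂ᵀw₂). -/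

import Mathlib

open Matrix

/-- One-step dissipation inequality for the observer error: if the 4×4
block LMI is negative semidefinite (expressed as `(-(·)).PosSemidef`) and `L = P⁻¹Y`, then
the successor error `e⁺ = (I - LC)A e - B w₁ - L w₂` satisfies
`e⁺ᵀ P e⁺ ≤ (1-α) eᵀ P e + α μ₁ (w₁ᵀw₁ + w₂ᵀw₂)`. -/
theorem stmt5 {n p m : ℕ}
    (A : Matrix (Fin n) (Fin n) ℝ) (B : Matrix (Fin n) (Fin p) ℝ)
    (C : Matrix (Fin m) (Fin n) ℝ)
    (α μ₁ : ℝ) (hα : α ∈ Set.Ioo (0 : ℝ) 1) (hμ₁ : 0 < μ₁)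
    (P : Matrix (Fin n) (Fin n) ℝ) (hP : P.PosDef) (Y : Matrix (Fin n) (Fin m) ℝ)
    (hLMI : (-(Matrix.fromBlocks
        (Matrix.fromBlocks (-P) ((Aᵀ * (P - Cᵀ * Yᵀ))ᵀ) (Aᵀ * (P - Cᵀ * Yᵀ)) ((α - 1) • P))
        (Matrix.fromBlocks (Bᵀ * P) 0 Yᵀ 0)ᵀ
        (Matrix.fromBlocks (Bᵀ * P) 0 Yᵀ 0)
        (Matrix.fromBlocks (-(α * μ₁) • (1 : Matrix (Fin p) (Fin p) ℝ)) 0 0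
          (-(α * μ₁) • (1 : Matrix (Fin m) (Fin m) ℝ))))).PosSemidef)
    (L : Matrix (Fin n) (Fin m) ℝ) (hL : L = P⁻¹ * Y)
    (e : Fin n → ℝ) (w₁ : Fin p → ℝ) (w₂ : Fin m → ℝ) :
    (((1 - L * C) * A) *ᵥ e - B *ᵥ w₁ - L *ᵥ w₂) ⬝ᵥ
        (P *ᵥ (((1 - L * C) * A) *ᵥ e - B *ᵥ w₁ - L *ᵥ w₂)) ≤
      (1 - α) * (e ⬝ᵥ (P *ᵥ e)) + α * μ₁ * (w₁ ⬝ᵥ w₁ + w₂ ⬝ᵥ w₂) := by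
  obtain ⟨hα0, hα1⟩ := hα
  have hPsym : Pᵀ = P := by exact hP.1
  have hY : P * L = Y := by
    rw [hL, ← Matrix.mul_assoc,
      Matrix.mul_nonsing_inv P ((Matrix.isUnit_iff_isUnit_det P).mp hP.isUnit),
      Matrix.one_mul]
  have hM : Aᵀ * (P - Cᵀ * Yᵀ) = ((1 - L * C) * A)ᵀ * P := by
    rw [← hY]
    simp only [Matrix.transpose_mul, Matrix.transpose_sub, Matrix.transpose_one, hPsym,
      Matrix.mul_sub, Matrix.sub_mul, Matrix.one_mul, Matrix.mul_one, Matrix.mul_assoc]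
  set f : Fin n → ℝ := ((1 - L * C) * A) *ᵥ e with hf
  set ep : Fin n → ℝ := f - B *ᵥ w₁ - L *ᵥ w₂ with hep
  have key := hLMI.dotProduct_mulVec_nonneg (Sum.elim (Sum.elim ep e) (Sum.elim (-w₁) (-w₂)))
  simp only [star_trivial, Matrix.fromBlocks_mulVec, sumElim_dotProduct_sumElim,
    Matrix.neg_mulVec, Matrix.mulVec_add, Matrix.add_mulVec, Matrix.smul_mulVec,
    Matrix.zero_mulVec, Matrix.mulVec_zero, Matrix.one_mulVec, Matrix.mulVec_neg,
    Matrix.fromBlocks_transpose, Matrix.transpose_zero,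
    dotProduct_neg, neg_dotProduct, dotProduct_add, add_dotProduct, dotProduct_smul,
    smul_eq_mul, add_zero, zero_add, neg_neg, Sum.elim_inl, Sum.elim_inr,
    Matrix.neg_mulVec_neg, Sum.elim_comp_inl, Sum.elim_comp_inr,
    Matrix.transpose_transpose, dotProduct_zero] at key
  have tr : ∀ {k l : ℕ} (M : Matrix (Fin k) (Fin l) ℝ) (x : Fin l → ℝ) (y : Fin k → ℝ),
      x ⬝ᵥ (Mᵀ *ᵥ y) = (M *ᵥ x) ⬝ᵥ y := by
    intro k l M x y
    rw [Matrix.dotProduct_mulVec, Matrix.vecMul_transpose]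
  have psym : ∀ x y : Fin n → ℝ, x ⬝ᵥ (P *ᵥ y) = y ⬝ᵥ (P *ᵥ x) := by
    intro x y
    rw [Matrix.dotProduct_mulVec, ← hPsym, Matrix.vecMul_transpose, hPsym, dotProduct_comm]
  have hYt : Yᵀ = Lᵀ * P := by rw [← hY, Matrix.transpose_mul, hPsym]
  have e2 : e ⬝ᵥ (Aᵀ * (P - Cᵀ * Yᵀ)) *ᵥ ep = f ⬝ᵥ (P *ᵥ ep) := by
    rw [hM, ← Matrix.mulVec_mulVec, tr, hf]
  have e1 : ep ⬝ᵥ (Aᵀ * (P - Cᵀ * Yᵀ))ᵀ *ᵥ e = f ⬝ᵥ (P *ᵥ ep) := by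
    rw [tr, dotProduct_comm, e2]
  have e3 : ep ⬝ᵥ (Bᵀ * P)ᵀ *ᵥ w₁ = (B *ᵥ w₁) ⬝ᵥ (P *ᵥ ep) := by
    rw [show (Bᵀ * P)ᵀ = P * B by rw [Matrix.transpose_mul, Matrix.transpose_transpose, hPsym],
      ← Matrix.mulVec_mulVec, psym]
  have e4 : w₁ ⬝ᵥ (Bᵀ * P) *ᵥ ep = (B *ᵥ w₁) ⬝ᵥ (P *ᵥ ep) := by
    rw [← Matrix.mulVec_mulVec, tr]
  have e5 : ep ⬝ᵥ Y *ᵥ w₂ = (L *ᵥ w₂) ⬝ᵥ (P *ᵥ ep) := by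
    rw [← hY, ← Matrix.mulVec_mulVec, psym]
  have e6 : w₂ ⬝ᵥ Yᵀ *ᵥ ep = (L *ᵥ w₂) ⬝ᵥ (P *ᵥ ep) := by
    rw [hYt, ← Matrix.mulVec_mulVec, tr]
  have e7 : ep ⬝ᵥ (P *ᵥ ep)
      = f ⬝ᵥ (P *ᵥ ep) - (B *ᵥ w₁) ⬝ᵥ (P *ᵥ ep) - (L *ᵥ w₂) ⬝ᵥ (P *ᵥ ep) := by
    rw [hep, sub_dotProduct, sub_dotProduct]
  rw [e1, e2, e3, e4, e5, e6] at key
  linarith [key, e7]
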